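/- Let d ≥ 1 and consider the linear ODE system on [0,∞): f' = −1ᵀg, g' = b·f + (β − r·Id)·g, with f : [0,∞) → ℝ, g : [0,∞) → ℝ^d, b ∈ ℝ^d, β ∈ ℝ^{d×d}, r ∈ ℝ. Assume that for all s ≥ 0: f(s) > 0, g(s) ≥ 0 componentwise, and 1ᵀg(s) ≤ a·f(s) for some constant a > 0. If 1ᵀb > 0, then lim_{s→∞} f(s) = 0 and lim_{s→∞} g(s) = 0. -/

import Mathlib

open Filter

/-- Auxiliary: monotone on a convex set from a `HasDerivAt` lower bound 0. -/
private lemma monoOn_aux {φ φ' : ℝ → ℝ} {S : Set ℝ} (hS : Convex ℝ S)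
    (h : ∀ s ∈ S, HasDerivAt φ (φ' s) s) (h0 : ∀ s ∈ interior S, 0 ≤ φ' s) :
    MonotoneOn φ S := by
  apply monotoneOn_of_deriv_nonneg hS
  · exact fun s hs => (h s hs).continuousAt.continuousWithinAt
  · exact fun s hs => (h s (interior_subset hs)).differentiableAt.differentiableWithinAt
  · intro s hs
    rw [(h s (interior_subset hs)).deriv]
    exact h0 s hs

private lemma antiOn_aux {φ φ' : ℝ → ℝ} {S : Set ℝ} (hS : Convex ℝ S)
    (h : ∀ s ∈ S, HasDerivAt φ (φ' s) s) (h0 : ∀ s ∈ interior S, φ' s ≤ 0) :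
    AntitoneOn φ S := by
  have := monoOn_aux (φ := fun s => -φ s) (φ' := fun s => -φ' s) hS
    (fun s hs => (h s hs).neg) (fun s hs => neg_nonneg.2 (h0 s hs))
  intro x hx y hy hxy
  have h2 := this hx hy hxy
  simp only [neg_le_neg_iff] at h2
  exact h2

/-- Deterministic core of the no-bubble result: if `f' = −1ᵀg`,
`g' = b·f + (β − r·Id)·g` on `[0,∞)`, with `f > 0`, `g ≥ 0` componentwise and
`1ᵀg ≤ a·f`, and `1ᵀb > 0`, then `f(s) → 0` and `g(s) → 0` as `s → ∞`. -/
theorem no_bubble_ode (d : ℕ) (hd : 1 ≤ d) (a r : ℝ) (ha : 0 < a)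
    (b : Fin d → ℝ) (β : Matrix (Fin d) (Fin d) ℝ)
    (f : ℝ → ℝ) (g : ℝ → Fin d → ℝ)
    (hf' : ∀ s ∈ Set.Ici (0 : ℝ), HasDerivAt f (-(∑ k, g s k)) s)
    (hg' : ∀ s ∈ Set.Ici (0 : ℝ), ∀ k : Fin d,
      HasDerivAt (fun u => g u k) (b k * f s + ((∑ l, β k l * g s l) - r * g s k)) s)
    (hfpos : ∀ s ∈ Set.Ici (0 : ℝ), 0 < f s)
    (hgpos : ∀ s ∈ Set.Ici (0 : ℝ), ∀ k, 0 ≤ g s k)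
    (hbd : ∀ s ∈ Set.Ici (0 : ℝ), (∑ k, g s k) ≤ a * f s)
    (hb : 0 < ∑ k, b k) :
    Tendsto f atTop (nhds 0) ∧ ∀ k : Fin d, Tendsto (fun s => g s k) atTop (nhds 0) := by
  -- notation
  set u : ℝ → ℝ := fun s => ∑ k, g s k with hu_def
  set w : ℝ → ℝ := fun s => (∑ k, ∑ l, β k l * g s l) - r * u s with hw_def
  have hupos : ∀ s ∈ Set.Ici (0 : ℝ), 0 ≤ u s :=
    fun s hs => Finset.sum_nonneg fun k _ => hgpos s hs k
  -- derivative of u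
  have hu' : ∀ s ∈ Set.Ici (0 : ℝ),
      HasDerivAt u ((∑ k, b k) * f s + w s) s := by
    intro s hs
    have h := HasDerivAt.fun_sum (fun k (_ : k ∈ Finset.univ) => hg' s hs k)
    refine h.congr_deriv ?_
    simp only [hw_def, hu_def, Finset.sum_add_distrib, Finset.sum_sub_distrib,
      Finset.sum_mul, Finset.mul_sum]
  -- f is antitone on [0,∞)
  have hAnti : AntitoneOn f (Set.Ici 0) :=
    antiOn_aux (convex_Ici 0) hf' (fun s hs => by
      have : (0:ℝ) ≤ u s := hupos s (interior_subset hs)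
      simpa using this)
  -- bounds
  have hf0 : 0 < f 0 := hfpos 0 Set.self_mem_Ici
  have hfle : ∀ s ∈ Set.Ici (0 : ℝ), f s ≤ f 0 := fun s hs => hAnti Set.self_mem_Ici hs hs
  have huble : ∀ s ∈ Set.Ici (0 : ℝ), u s ≤ a * f 0 := fun s hs =>
    (hbd s hs).trans (by nlinarith [hfle s hs, hfpos s hs])
  -- f converges to L
  obtain ⟨L, hL0, hfL, hfgeL⟩ : ∃ L, 0 ≤ L ∧ Tendsto f atTop (nhds L) ∧
      ∀ s ∈ Set.Ici (0:ℝ), L ≤ f s := by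
    set h : ℝ → ℝ := fun s => f (max s 0) with hh_def
    have hanti : Antitone h := fun x y hxy =>
      hAnti (Set.mem_Ici.2 (le_max_right x 0)) (Set.mem_Ici.2 (le_max_right y 0))
        (max_le_max hxy le_rfl)
    have hbdd : BddBelow (Set.range h) := by
      refine ⟨0, ?_⟩
      rintro y ⟨x, rfl⟩
      exact (hfpos _ (Set.mem_Ici.2 (le_max_right x 0))).le
    have hhto : Tendsto h atTop (nhds (⨅ i, h i)) := tendsto_atTop_ciInf hanti hbdd
    have heq : f =ᶠ[atTop] h := by
      filter_upwards [eventually_ge_atTop (0:ℝ)] with s hs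
      simp [hh_def, max_eq_left hs]
    have hfL : Tendsto f atTop (nhds (⨅ i, h i)) := hhto.congr' heq.symm
    refine ⟨⨅ i, h i, ?_, hfL, ?_⟩
    · refine ge_of_tendsto hfL ?_
      filter_upwards [eventually_ge_atTop (0:ℝ)] with s hs
      exact (hfpos s hs).le
    · intro s hs
      refine le_of_tendsto hfL ?_
      filter_upwards [eventually_ge_atTop s] with τ hτ
      exact hAnti hs (Set.mem_Ici.2 (le_trans hs hτ)) hτ
  -- lower bound on u'
  set M : ℝ := ((∑ k, ∑ l, |β k l|) + |r|) * (a * f 0) with hM_def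
  have hM0 : 0 ≤ M := by
    have h1 : (0:ℝ) ≤ ∑ k, ∑ l, |β k l| :=
      Finset.sum_nonneg fun k _ => Finset.sum_nonneg fun l _ => abs_nonneg _
    have := hf0
    positivity
  have hglesum : ∀ s ∈ Set.Ici (0:ℝ), ∀ l, g s l ≤ a * f 0 := by
    intro s hs l
    calc g s l ≤ u s := Finset.single_le_sum (fun k _ => hgpos s hs k) (Finset.mem_univ l)
    _ ≤ a * f 0 := huble s hs
  have hwbound : ∀ s ∈ Set.Ici (0:ℝ), |w s| ≤ M := by
    intro s hs
    have h1 : |∑ k, ∑ l, β k l * g s l| ≤ (∑ k, ∑ l, |β k l|) * (a * f 0) := by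
      calc |∑ k, ∑ l, β k l * g s l| ≤ ∑ k, |∑ l, β k l * g s l| :=
            Finset.abs_sum_le_sum_abs _ _
        _ ≤ ∑ k, ∑ l, |β k l * g s l| :=
            Finset.sum_le_sum fun k _ => Finset.abs_sum_le_sum_abs _ _
        _ ≤ ∑ k, ∑ l, |β k l| * (a * f 0) := by
            refine Finset.sum_le_sum fun k _ => Finset.sum_le_sum fun l _ => ?_
            rw [abs_mul, abs_of_nonneg (hgpos s hs l)]
            exact mul_le_mul_of_nonneg_left (hglesum s hs l) (abs_nonneg _)
        _ = (∑ k, ∑ l, |β k l|) * (a * f 0) := by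
            simp [Finset.sum_mul]
    have h2 : |r * u s| ≤ |r| * (a * f 0) := by
      rw [abs_mul, abs_of_nonneg (hupos s hs)]
      exact mul_le_mul_of_nonneg_left (huble s hs) (abs_nonneg r)
    calc |w s| ≤ |∑ k, ∑ l, β k l * g s l| + |r * u s| := abs_sub _ _
    _ ≤ (∑ k, ∑ l, |β k l|) * (a * f 0) + |r| * (a * f 0) := by gcongr
    _ = M := by rw [hM_def]; ring
  have hu'lb : ∀ s ∈ Set.Ici (0:ℝ), -M ≤ (∑ k, b k) * f s + w s := by
    intro s hs
    have h1 : 0 ≤ (∑ k, b k) * f s := le_of_lt (mul_pos hb (hfpos s hs))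
    have h2 := (abs_le.1 (hwbound s hs)).1
    linarith
  -- u tends to 0
  -- the shifted function u + M·τ is monotone on [0,∞)
  have mono1 : MonotoneOn (fun τ => u τ + M * τ) (Set.Ici 0) := by
    refine monoOn_aux (φ' := fun τ => ((∑ k, b k) * f τ + w τ) + M) (convex_Ici 0)
      (fun τ hτ => ?_) (fun τ hτ => ?_)
    · simpa using (hu' τ hτ).fun_add ((hasDerivAt_id τ).const_mul M)
    · rw [interior_Ici] at hτ
      have := hu'lb τ (Set.mem_Ici.2 (le_of_lt hτ))
      show 0 ≤ (∑ k, b k) * f τ + w τ + M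
      linarith
  have huto : Tendsto u atTop (nhds 0) := by
    rw [Metric.tendsto_atTop]
    intro ε hε
    set δ : ℝ := ε / (2 * (M + 1)) with hδ_def
    have hδ : 0 < δ := by positivity
    have hMδ : M * δ ≤ ε / 2 := by
      have hM1 : M + 1 ≠ 0 := by positivity
      have hkey : (M + 1) * δ = ε / 2 := by
        rw [hδ_def]; field_simp
      nlinarith [hδ.le]
    have hev : ∀ᶠ s in atTop, f s < L + ε * δ / 4 :=
      hfL.eventually (gt_mem_nhds (by nlinarith : L < L + ε * δ / 4))
    obtain ⟨N, hN⟩ := eventually_atTop.1 (hev.and (eventually_ge_atTop (0:ℝ)))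
    refine ⟨N, fun s hs => ?_⟩
    have hs0 : (0:ℝ) ≤ s := (hN s hs).2
    rw [Real.dist_eq, sub_zero, abs_of_nonneg (hupos s hs0)]
    by_contra hcon
    push_neg at hcon
    -- on [s, s+δ], u stays ≥ ε/2
    have keyA : ∀ τ ∈ Set.Icc s (s + δ), ε / 2 ≤ u τ := by
      intro τ hτ
      have h1 : u s + M * s ≤ u τ + M * τ :=
        mono1 (Set.mem_Ici.2 hs0) (Set.mem_Ici.2 (le_trans hs0 hτ.1)) hτ.1
      have h2 : M * τ - M * s ≤ M * δ := by nlinarith [hτ.2]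
      linarith
    -- hence f drops by at least ε·δ/2 over [s, s+δ]
    have anti2 : AntitoneOn (fun τ => f τ + (ε / 2) * τ) (Set.Icc s (s + δ)) := by
      refine antiOn_aux (φ' := fun τ => -(∑ k, g τ k) + ε / 2) (convex_Icc _ _)
        (fun τ hτ => ?_) (fun τ hτ => ?_)
      · simpa using (hf' τ (Set.mem_Ici.2 (le_trans hs0 hτ.1))).fun_add
          ((hasDerivAt_id τ).const_mul (ε / 2))
      · rw [interior_Icc] at hτ
        have := keyA τ (Set.Ioo_subset_Icc_self hτ)
        linarith
    have hdrop : f (s + δ) + (ε / 2) * (s + δ) ≤ f s + (ε / 2) * s :=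
      anti2 (Set.mem_Icc.2 ⟨le_rfl, by linarith⟩)
        (Set.mem_Icc.2 ⟨by linarith, le_rfl⟩) (by linarith)
    have hfs : f s < L + ε * δ / 4 := (hN s hs).1
    have hfsd : L ≤ f (s + δ) := hfgeL (s + δ) (Set.mem_Ici.2 (by linarith))
    nlinarith
  -- each g k tends to 0
  have hgto : ∀ k : Fin d, Tendsto (fun s => g s k) atTop (nhds 0) := by
    intro k
    apply tendsto_of_tendsto_of_tendsto_of_le_of_le' tendsto_const_nhds huto
    · filter_upwards [eventually_ge_atTop (0:ℝ)] with s hs using hgpos s hs k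
    · filter_upwards [eventually_ge_atTop (0:ℝ)] with s hs using
        Finset.single_le_sum (fun j _ => hgpos s hs j) (Finset.mem_univ k)
  -- L = 0
  have hL : L = 0 := by
    by_contra hne
    have hLpos : 0 < L := lt_of_le_of_ne hL0 (Ne.symm hne)
    set c : ℝ := (∑ k, b k) * L / 2 with hc_def
    have hc : 0 < c := by positivity
    -- w tends to 0
    have h1 : Tendsto (fun s => ∑ k : Fin d, ∑ l : Fin d, β k l * g s l) atTop
        (nhds (∑ k : Fin d, ∑ l : Fin d, β k l * 0)) :=
      tendsto_finset_sum _ fun k _ => tendsto_finset_sum _ fun l _ =>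
        (hgto l).const_mul _
    have hwto : Tendsto w atTop (nhds 0) := by
      have h2 := huto.const_mul r
      have := h1.sub h2
      simpa [hw_def] using this
    have hev : ∀ᶠ s in atTop, -c < w s :=
      hwto.eventually (lt_mem_nhds (by linarith : -c < 0))
    obtain ⟨N, hN⟩ := eventually_atTop.1 (hev.and (eventually_ge_atTop (0:ℝ)))
    have hN0 : (0:ℝ) ≤ N := (hN N le_rfl).2
    -- u τ − c·τ is monotone on [N, ∞)
    have mono2 : MonotoneOn (fun τ => u τ - c * τ) (Set.Ici N) := by
      refine monoOn_aux (φ' := fun τ => ((∑ k, b k) * f τ + w τ) - c) (convex_Ici N)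
        (fun τ hτ => ?_) (fun τ hτ => ?_)
      · have hτ0 : τ ∈ Set.Ici (0:ℝ) := Set.mem_Ici.2 (le_trans hN0 hτ)
        simpa using (hu' τ hτ0).fun_sub ((hasDerivAt_id τ).const_mul c)
      · rw [interior_Ici] at hτ
        have hτN : N ≤ τ := le_of_lt hτ
        have hτ0 : τ ∈ Set.Ici (0:ℝ) := Set.mem_Ici.2 (le_trans hN0 hτN)
        have hw1 : -c < w τ := (hN τ hτN).1
        have hfτ : L ≤ f τ := hfgeL τ hτ0
        have hbf : (∑ k, b k) * L ≤ (∑ k, b k) * f τ :=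
          mul_le_mul_of_nonneg_left hfτ hb.le
        have h2c : (∑ k, b k) * L = 2 * c := by rw [hc_def]; ring
        show 0 ≤ (∑ k, b k) * f τ + w τ - c
        linarith
    -- take s large enough that u s must exceed its bound
    set s : ℝ := N + (a * f 0) / c + 1 with hs_def
    have hsN : N ≤ s := by
      have : 0 < (a * f 0) / c + 1 := by positivity
      rw [hs_def]; linarith
    have hs0 : (0:ℝ) ≤ s := le_trans hN0 hsN
    have key : u N - c * N ≤ u s - c * s :=
      mono2 (Set.mem_Ici.2 le_rfl) (Set.mem_Ici.2 hsN) hsN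
    have hcs : c * s - c * N = a * f 0 + c := by
      rw [hs_def]
      field_simp
      ring
    have h3 := huble s (Set.mem_Ici.2 hs0)
    have h4 := hupos N (Set.mem_Ici.2 hN0)
    linarith
  exact ⟨hL ▸ hfL, hgto⟩
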